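/- Let N ≥ 2, let G = (g_1,…,g_N) be a K-dual of F = (f_1,…,f_N), and suppose: (i) each ⟨g_i, f_i⟩ is a nonnegative real number, and (ii) there is a real constant c ≥ 0 with ⟨g_i, f_j⟩⟨g_j, f_i⟩ = c for all i ≠ j. Set r₁ = max_{1≤i≤N} ⟨g_i, f_i⟩, Δ = { i : ⟨g_i, f_i⟩ = r₁ }, and r₂ = max_{i≠j} ρ(T_{ij}), where T_{ij} f = ⟨f, g_i⟩ f_i + ⟨f, g_j⟩ f_j and ρ denotes the spectral radius. Then: if c > 0 and Δ has exactly one element, r₂ = (1/2)( r₁ + m + √( (r₁ − m)² + 4c ) ), where m = max_{i ∉ Δ} ⟨g_i, f_i⟩; if c > 0 and Δ has more than one element, r₂ = r₁ + √c; and if c = 0, r₂ = r₁. -/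

import Mathlib

local notation "⟪" x ", " y "⟫" => @inner ℂ _ _ x y

/-- The spectral radius of an operator `T` on a finite-dimensional complex inner product
space: the maximum of `|λ|` over the spectrum of `T` over `ℂ`. -/
noncomputable def specRad {H : Type*} [NormedAddCommGroup H] [InnerProductSpace ℂ H]
    (T : H →L[ℂ] H) : ℝ :=
  ⨆ lam ∈ spectrum ℂ T, ‖lam‖

/-- The two-erasure error operator `T_{ij} f = ⟨f, g_i⟩ f_i + ⟨f, g_j⟩ f_j`
(the paper's `⟨f, g⟩` is linear in the first slot, i.e. Mathlib's `⟪g, f⟫`). -/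
noncomputable def erasureOp {H : Type*} [NormedAddCommGroup H] [InnerProductSpace ℂ H]
    (fi fj gi gj : H) : H →L[ℂ] H :=
  (innerSL ℂ gi).smulRight fi + (innerSL ℂ gj).smulRight fj

lemma mem_spec_iff {H : Type*} [NormedAddCommGroup H] [InnerProductSpace ℂ H]
    [FiniteDimensional ℂ H] (T : H →L[ℂ] H) (μ : ℂ) :
    μ ∈ spectrum ℂ T ↔ ∃ v ≠ 0, T v = μ • v := by
  have h1 : spectrum ℂ T = spectrum ℂ (T : H →ₗ[ℂ] H) := by
    rw [← AlgEquiv.spectrum_eq (Module.End.toContinuousLinearMap (𝕜 := ℂ) H) (T : H →ₗ[ℂ] H)]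
    rfl
  rw [h1, ← Module.End.hasEigenvalue_iff_mem_spectrum]
  rw [Module.End.hasEigenvalue_iff, Submodule.ne_bot_iff]
  constructor
  · rintro ⟨v, hv, hv0⟩
    exact ⟨v, hv0, Module.End.mem_eigenspace_iff.mp hv⟩
  · rintro ⟨v, hv0, hv⟩
    exact ⟨v, Module.End.mem_eigenspace_iff.mpr hv, hv0⟩

lemma erasureOp_apply {H : Type*} [NormedAddCommGroup H] [InnerProductSpace ℂ H]
    (fi fj gi gj : H) (v : H) :
    erasureOp fi fj gi gj v = ⟪gi, v⟫ • fi + ⟪gj, v⟫ • fj := by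
  simp [erasureOp]

lemma key {H : Type*} [NormedAddCommGroup H] [InnerProductSpace ℂ H] [FiniteDimensional ℂ H]
    (hdim : 1 ≤ Module.finrank ℂ H)
    (fi fj gi gj : H) (a b c : ℝ) (ha0 : 0 ≤ a) (hb0 : 0 ≤ b) (hc : 0 ≤ c)
    (ha : ⟪gi, fi⟫ = (a : ℂ)) (hb : ⟪gj, fj⟫ = (b : ℂ))
    (hpq : ⟪gi, fj⟫ * ⟪gj, fi⟫ = (c : ℂ)) :
    specRad (erasureOp fi fj gi gj) = (a + b + Real.sqrt ((a - b) ^ 2 + 4 * c)) / 2 := by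
  haveI : Nontrivial H := Module.nontrivial_of_finrank_pos (R := ℂ) (by omega)
  set T := erasureOp fi fj gi gj with hT
  set s := Real.sqrt ((a - b) ^ 2 + 4 * c) with hs
  have hD : (0:ℝ) ≤ (a - b) ^ 2 + 4 * c := by positivity
  have hs2 : s ^ 2 = (a - b) ^ 2 + 4 * c := Real.sq_sqrt hD
  have hs0 : 0 ≤ s := Real.sqrt_nonneg _
  have habs : |a - b| ≤ s := by
    rw [← Real.sqrt_sq_eq_abs]; exact Real.sqrt_le_sqrt (by linarith)
  have hab1 : a - b ≤ s := le_trans (le_abs_self _) habs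
  have hab2 : b - a ≤ s := by have := (abs_le.mp habs).1; linarith
  set lam := (a + b + s) / 2 with hlam
  set lam' := (a + b - s) / 2 with hlam'
  have halam : a ≤ lam := by rw [hlam]; linarith
  have hblam : b ≤ lam := by rw [hlam]; linarith
  have hlam0 : 0 ≤ lam := le_trans ha0 halam
  have habs' : |lam'| ≤ lam := abs_le.mpr ⟨by rw [hlam, hlam']; linarith, by rw [hlam, hlam']; linarith⟩
  have hs2C : ((s : ℂ)) ^ 2 = ((a : ℂ) - b) ^ 2 + 4 * c := by
    exact_mod_cast congrArg (fun x : ℝ => (x : ℂ)) hs2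
  have hroots : ∀ μ : ℂ, (μ - a) * (μ - b) - c = (μ - (lam : ℝ)) * (μ - (lam' : ℝ)) := by
    intro μ
    rw [hlam, hlam']
    push_cast
    linear_combination (1/4 : ℂ) * hs2C
  have hlamroot : ((lam : ℝ) - (a:ℂ)) * ((lam : ℝ) - (b:ℂ)) = (c : ℂ) := by
    have h := hroots ((lam : ℝ) : ℂ)
    rw [sub_self, zero_mul] at h
    linear_combination h
  -- upper bound
  have hub : ∀ μ ∈ spectrum ℂ T, ‖μ‖ ≤ lam := by
    intro μ hμ
    obtain ⟨v, hv0, hv⟩ := (mem_spec_iff T μ).mp hμ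
    rcases eq_or_ne μ 0 with h0 | h0
    · simpa [h0] using hlam0
    · set x := ⟪gi, v⟫ with hx'
      set y := ⟪gj, v⟫ with hy'
      have hTv : x • fi + y • fj = μ • v := by rw [hx', hy', ← erasureOp_apply]; exact hv
      have hx : x * a + y * ⟪gi, fj⟫ = μ * x := by
        have h := congrArg (fun w => ⟪gi, w⟫) hTv
        simpa only [inner_add_right, inner_smul_right, ha, hx'] using h
      have hy : x * ⟪gj, fi⟫ + y * b = μ * y := by
        have h := congrArg (fun w => ⟪gj, w⟫) hTv
        simpa only [inner_add_right, inner_smul_right, hb, hy'] using h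
      have hne : ¬(x = 0 ∧ y = 0) := by
        rintro ⟨hx0, hy0⟩
        rw [hx0, hy0, zero_smul, zero_smul, add_zero] at hTv
        exact hv0 ((smul_eq_zero.mp hTv.symm).resolve_left h0)
      have e1 : (μ - a) * x = ⟪gi, fj⟫ * y := by linear_combination -hx
      have e2 : (μ - b) * y = ⟪gj, fi⟫ * x := by linear_combination -hy
      have hquad : (μ - a) * (μ - b) = (c : ℂ) := by
        rcases eq_or_ne x 0 with hx0 | hx0
        · have hy0 : y ≠ 0 := fun h => hne ⟨hx0, h⟩
          have hp0 : ⟪gi, fj⟫ = 0 := by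
            have h := e1; rw [hx0, mul_zero] at h
            exact (mul_eq_zero.mp h.symm).resolve_right hy0
          have hc0 : (c : ℂ) = 0 := by rw [← hpq, hp0, zero_mul]
          have hμb : μ - b = 0 := by
            have h := e2; rw [hx0, mul_zero] at h
            exact (mul_eq_zero.mp h).resolve_right hy0
          rw [hμb, mul_zero, hc0]
        · rcases eq_or_ne y 0 with hy0 | hy0
          · have hq0 : ⟪gj, fi⟫ = 0 := by
              have h := e2; rw [hy0, mul_zero] at h
              exact (mul_eq_zero.mp h.symm).resolve_right hx0
            have hc0 : (c : ℂ) = 0 := by rw [← hpq, hq0, mul_zero]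
            have hμa : μ - a = 0 := by
              have h := e1; rw [hy0, mul_zero] at h
              exact (mul_eq_zero.mp h).resolve_right hx0
            rw [hμa, zero_mul, hc0]
          · have h3 : ((μ - a) * (μ - b)) * (x * y) = (c : ℂ) * (x * y) := by
              linear_combination ((μ - b) * y) * e1 + (⟪gi, fj⟫ * y) * e2 + (x * y) * hpq
            exact mul_right_cancel₀ (mul_ne_zero hx0 hy0) h3
      have := hroots μ
      rw [hquad, sub_self] at this
      rcases mul_eq_zero.mp this.symm with h | h
      · rw [sub_eq_zero.mp h, Complex.norm_real, Real.norm_eq_abs, abs_of_nonneg hlam0]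
      · rw [sub_eq_zero.mp h, Complex.norm_real, Real.norm_eq_abs]
        exact habs'
  -- lam is in the spectrum
  have hmem : ((lam : ℝ) : ℂ) ∈ spectrum ℂ T := by
    rw [mem_spec_iff]
    rcases eq_or_ne lam 0 with hlz | hlz
    · have haz : a = 0 := le_antisymm (hlz ▸ halam) ha0
      have hbz : b = 0 := le_antisymm (hlz ▸ hblam) hb0
      have hsz : s = 0 := by rw [hlam] at hlz; linarith
      have hcz : c = 0 := by nlinarith [hs2]
      have hcC : (c : ℂ) = 0 := by rw [hcz]; norm_num
      have hpq0 : ⟪gi, fj⟫ = 0 ∨ ⟪gj, fi⟫ = 0 := mul_eq_zero.mp (hpq.trans hcC)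
      rw [hlz]
      push_cast
      rcases hpq0 with hp | hq
      · by_cases hfj : fj = 0
        · by_cases hfi : fi = 0
          · obtain ⟨v, hv⟩ := exists_ne (0 : H)
            exact ⟨v, hv, by rw [erasureOp_apply, hfi, hfj]; simp⟩
          · exact ⟨fi, hfi, by rw [erasureOp_apply, ha, haz, hfj]; simp⟩
        · exact ⟨fj, hfj, by rw [erasureOp_apply, hp, hb, hbz]; simp⟩
      · by_cases hfi : fi = 0
        · by_cases hfj : fj = 0
          · obtain ⟨v, hv⟩ := exists_ne (0 : H)
            exact ⟨v, hv, by rw [erasureOp_apply, hfi, hfj]; simp⟩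
          · exact ⟨fj, hfj, by rw [erasureOp_apply, hfi, hb, hbz]; simp⟩
        · exact ⟨fi, hfi, by rw [erasureOp_apply, ha, haz, hq]; simp⟩
    · have hlC : ((lam : ℝ) : ℂ) ≠ 0 := Complex.ofReal_ne_zero.mpr hlz
      by_cases hp : ⟪gi, fj⟫ = 0
      · by_cases hq : ⟪gj, fi⟫ = 0
        · have hcC : (c : ℂ) = 0 := by rw [← hpq, hp, zero_mul]
          have hcz : c = 0 := by exact_mod_cast hcC
          have hroot0 : ((lam : ℝ) - (a:ℂ)) * ((lam : ℝ) - (b:ℂ)) = 0 := by rw [hlamroot, hcC]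
          rcases mul_eq_zero.mp hroot0 with h | h
          · have hla : (a : ℂ) = (lam : ℝ) := (sub_eq_zero.mp h).symm
            have hfi : fi ≠ 0 := by
              intro h0
              rw [h0, inner_zero_right] at ha
              rw [← ha] at hla
              exact hlC hla.symm
            exact ⟨fi, hfi, by rw [erasureOp_apply, ha, hla, hq, zero_smul, add_zero]⟩
          · have hlb : (b : ℂ) = (lam : ℝ) := (sub_eq_zero.mp h).symm
            have hfj : fj ≠ 0 := by
              intro h0
              rw [h0, inner_zero_right] at hb
              rw [← hb] at hlb
              exact hlC hlb.symm
            exact ⟨fj, hfj, by rw [erasureOp_apply, hp, hb, hlb, zero_smul, zero_add]⟩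
        · -- q ≠ 0 : eigenvector ((lam - b)) • fi + q • fj
          set w := (((lam : ℝ) : ℂ) - b) • fi + ⟪gj, fi⟫ • fj with hw
          have hiw1 : ⟪gi, w⟫ = ((lam : ℝ) : ℂ) * (((lam : ℝ) : ℂ) - b) := by
            rw [hw]
            simp only [inner_add_right, inner_smul_right, ha]
            linear_combination hpq - hlamroot
          have hiw2 : ⟪gj, w⟫ = ((lam : ℝ) : ℂ) * ⟪gj, fi⟫ := by
            rw [hw]
            simp only [inner_add_right, inner_smul_right, hb]
            ring
          have hw0 : w ≠ 0 := by
            intro h0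
            have := hiw2
            rw [h0, inner_zero_right] at this
            rcases mul_eq_zero.mp this.symm with h | h
            · exact hlC h
            · exact hq h
          refine ⟨w, hw0, ?_⟩
          rw [erasureOp_apply, hiw1, hiw2, hw, smul_add, smul_smul, smul_smul]
      · -- p ≠ 0 : eigenvector p • fi + (lam - a) • fj
        set w := ⟪gi, fj⟫ • fi + (((lam : ℝ) : ℂ) - a) • fj with hw
        have hiw1 : ⟪gi, w⟫ = ((lam : ℝ) : ℂ) * ⟪gi, fj⟫ := by
          rw [hw]
          simp only [inner_add_right, inner_smul_right, ha]
          ring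
        have hiw2 : ⟪gj, w⟫ = ((lam : ℝ) : ℂ) * (((lam : ℝ) : ℂ) - a) := by
          rw [hw]
          simp only [inner_add_right, inner_smul_right, hb]
          linear_combination hpq - hlamroot
        have hw0 : w ≠ 0 := by
          intro h0
          have := hiw1
          rw [h0, inner_zero_right] at this
          rcases mul_eq_zero.mp this.symm with h | h
          · exact hlC h
          · exact hp h
        refine ⟨w, hw0, ?_⟩
        rw [erasureOp_apply, hiw1, hiw2, hw, smul_add, smul_smul, smul_smul]
  -- conclude
  refine le_antisymm ?_ ?_
  · exact Real.iSup_le (fun μ => Real.iSup_le (fun hμ => hub μ hμ) hlam0) hlam0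
  · have hbdd : BddAbove (Set.range fun μ : ℂ => ⨆ _ : μ ∈ spectrum ℂ T, ‖μ‖) := by
      refine ⟨lam, ?_⟩
      rintro r ⟨μ, rfl⟩
      exact Real.iSup_le (fun hμ => hub μ hμ) hlam0
    calc (a + b + s) / 2 = ‖((lam : ℝ) : ℂ)‖ := by
          rw [Complex.norm_real, Real.norm_eq_abs, abs_of_nonneg hlam0]
      _ ≤ specRad T := by
          have h2 : (⨆ _ : ((lam : ℝ) : ℂ) ∈ spectrum ℂ T, ‖((lam : ℝ) : ℂ)‖)
              = ‖((lam : ℝ) : ℂ)‖ := ciSup_pos hmem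
          exact h2 ▸ le_ciSup hbdd ((lam : ℝ) : ℂ)

section helpers
lemma phi_mono (c : ℝ) (hc : 0 ≤ c) {a a' b : ℝ} (h : a ≤ a') :
    (a + b + Real.sqrt ((a - b) ^ 2 + 4 * c)) / 2
      ≤ (a' + b + Real.sqrt ((a' - b) ^ 2 + 4 * c)) / 2 := by
  have hs'0 : 0 ≤ Real.sqrt ((a' - b) ^ 2 + 4 * c) := Real.sqrt_nonneg _
  have hs'2 : (Real.sqrt ((a' - b) ^ 2 + 4 * c)) ^ 2 = (a' - b) ^ 2 + 4 * c :=
    Real.sq_sqrt (by positivity)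
  have hba : b - a' ≤ Real.sqrt ((a' - b) ^ 2 + 4 * c) := by
    have h1 : |a' - b| ≤ Real.sqrt ((a' - b) ^ 2 + 4 * c) := by
      rw [← Real.sqrt_sq_eq_abs]; exact Real.sqrt_le_sqrt (by linarith)
    have := (abs_le.mp h1).1; linarith
  have key : Real.sqrt ((a - b) ^ 2 + 4 * c)
      ≤ (a' - a) + Real.sqrt ((a' - b) ^ 2 + 4 * c) := by
    have h2 : (a - b) ^ 2 + 4 * c ≤ ((a' - a) + Real.sqrt ((a' - b) ^ 2 + 4 * c)) ^ 2 := by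
      nlinarith [mul_nonneg (sub_nonneg.mpr h) (by linarith : (0:ℝ) ≤ Real.sqrt ((a' - b) ^ 2 + 4 * c) - (b - a'))]
    calc Real.sqrt ((a - b) ^ 2 + 4 * c)
        ≤ Real.sqrt (((a' - a) + Real.sqrt ((a' - b) ^ 2 + 4 * c)) ^ 2) := Real.sqrt_le_sqrt h2
      _ = (a' - a) + Real.sqrt ((a' - b) ^ 2 + 4 * c) := Real.sqrt_sq (by linarith)
  linarith

lemma phi_symm (c a b : ℝ) :
    (a + b + Real.sqrt ((a - b) ^ 2 + 4 * c)) / 2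
      = (b + a + Real.sqrt ((b - a) ^ 2 + 4 * c)) / 2 := by
  rw [show (a - b) ^ 2 = (b - a) ^ 2 by ring]; ring
end helpers


/-- Let `N ≥ 2` and `G` a `K`-dual of `F` with each `⟨g_i, f_i⟩` a nonnegative
real and `⟨g_i, f_j⟩⟨g_j, f_i⟩ = c ≥ 0` for all `i ≠ j`.  With
`r₁ = max_i ⟨g_i, f_i⟩`, `Δ` the set of maximizing indices,
`m = max_{i ∉ Δ} ⟨g_i, f_i⟩` and `r₂ = max_{i≠j} ρ(T_{ij})`:
if `c > 0` and `Δ` is a singleton then `r₂ = (r₁ + m + √((r₁ − m)² + 4c))/2`;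
if `c > 0` and `Δ` has more than one element then `r₂ = r₁ + √c`;
and if `c = 0` then `r₂ = r₁`. -/
theorem stmt17
    {H : Type*} [NormedAddCommGroup H] [InnerProductSpace ℂ H] [FiniteDimensional ℂ H]
    (hdim : 1 ≤ Module.finrank ℂ H)
    {N : ℕ} (hN : 2 ≤ N)
    (K : H →L[ℂ] H)
    (F G : Fin N → H)
    (hdual : ∀ f : H, K f = ∑ i, ⟪G i, f⟫ • F i)
    (hpos : ∀ i, (⟪F i, G i⟫).im = 0 ∧ 0 ≤ (⟪F i, G i⟫).re)
    (c : ℝ) (hc : 0 ≤ c)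
    (huni : ∀ i j, i ≠ j → ⟪F j, G i⟫ * ⟪F i, G j⟫ = (c : ℂ))
    (r₁ : ℝ) (hr₁ : r₁ = ⨆ i, (⟪F i, G i⟫).re)
    (m : ℝ) (hm : m = ⨆ i : {i : Fin N // (⟪F i, G i⟫).re ≠ r₁}, (⟪F i.1, G i.1⟫).re)
    (r₂ : ℝ) (hr₂ : r₂ = ⨆ p : {p : Fin N × Fin N // p.1 ≠ p.2},
      specRad (erasureOp (F p.1.1) (F p.1.2) (G p.1.1) (G p.1.2))) :
    (0 < c → (∃! k : Fin N, (⟪F k, G k⟫).re = r₁) →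
      r₂ = (r₁ + m + Real.sqrt ((r₁ - m) ^ 2 + 4 * c)) / 2) ∧
    (0 < c → (∃ k l : Fin N, k ≠ l ∧ (⟪F k, G k⟫).re = r₁ ∧ (⟪F l, G l⟫).re = r₁) →
      r₂ = r₁ + Real.sqrt c) ∧
    (c = 0 → r₂ = r₁) := by
  haveI : Nontrivial (Fin N) := Fin.nontrivial_iff_two_le.mpr hN
  set A : Fin N → ℝ := fun i => (⟪F i, G i⟫).re with hA
  have hGF : ∀ i, ⟪G i, F i⟫ = ((A i : ℝ) : ℂ) := by
    intro i
    have h1 := (hpos i).1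
    have h2 : ⟪G i, F i⟫ = (starRingEnd ℂ) ⟪F i, G i⟫ := (inner_conj_symm _ _).symm
    apply Complex.ext
    · rw [h2]; simp only [Complex.conj_re, Complex.ofReal_re]; rfl
    · rw [h2]; simp only [Complex.conj_im, Complex.ofReal_im, h1, neg_zero]
  have hcross : ∀ i j, i ≠ j → ⟪G i, F j⟫ * ⟪G j, F i⟫ = (c : ℂ) := by
    intro i j hij
    have h := congrArg (starRingEnd ℂ) (huni i j hij)
    rwa [map_mul, inner_conj_symm, inner_conj_symm, Complex.conj_ofReal] at h
  have hre : ∀ i, 0 ≤ A i := fun i => (hpos i).2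
  have hsp : ∀ (i j : Fin N), i ≠ j →
      specRad (erasureOp (F i) (F j) (G i) (G j))
        = (A i + A j + Real.sqrt ((A i - A j) ^ 2 + 4 * c)) / 2 :=
    fun i j hij => key hdim _ _ _ _ _ _ _ (hre i) (hre j) hc (hGF i) (hGF j) (hcross i j hij)
  -- facts about r₁
  have hbddA : BddAbove (Set.range A) := (Set.finite_range A).bddAbove
  have hler₁ : ∀ i, A i ≤ r₁ := fun i => by rw [hr₁]; exact le_ciSup hbddA i
  obtain ⟨k, hk⟩ := Finite.exists_max A
  have hkr : A k = r₁ := le_antisymm (hler₁ k) (by rw [hr₁]; exact ciSup_le hk)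
  haveI : Nonempty {p : Fin N × Fin N // p.1 ≠ p.2} := by
    obtain ⟨j, hj⟩ := exists_ne k
    exact ⟨⟨(k, j), Ne.symm hj⟩⟩
  -- facts about r₂
  have hbddP : BddAbove (Set.range fun p : {p : Fin N × Fin N // p.1 ≠ p.2} =>
      specRad (erasureOp (F p.1.1) (F p.1.2) (G p.1.1) (G p.1.2))) :=
    (Set.finite_range _).bddAbove
  have hp2r : ∀ p : {p : Fin N × Fin N // p.1 ≠ p.2},
      specRad (erasureOp (F p.1.1) (F p.1.2) (G p.1.1) (G p.1.2)) ≤ r₂ :=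
    fun p => by rw [hr₂]; exact le_ciSup hbddP p
  have hr₂le : ∀ z : ℝ, (∀ p : {p : Fin N × Fin N // p.1 ≠ p.2},
      specRad (erasureOp (F p.1.1) (F p.1.2) (G p.1.1) (G p.1.2)) ≤ z) → r₂ ≤ z := by
    intro z hz; rw [hr₂]; exact ciSup_le hz
  have h4c : Real.sqrt (4 * c) = 2 * Real.sqrt c := by
    rw [show (4:ℝ) * c = 2 ^ 2 * c by ring, Real.sqrt_mul (by positivity : (0:ℝ) ≤ 2 ^ 2) c,
      Real.sqrt_sq (by norm_num : (0:ℝ) ≤ 2)]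
  refine ⟨?_, ?_, ?_⟩
  · -- unique maximizer
    rintro hc0 ⟨k₀, hk₀r, huq⟩
    have hk₀ : A k₀ = r₁ := hk₀r
    have hbddS : BddAbove (Set.range fun i : {i : Fin N // A i ≠ r₁} => A i.1) :=
      (Set.finite_range _).bddAbove
    have hAm : ∀ i, i ≠ k₀ → A i ≤ m := by
      intro i hi
      have hne : A i ≠ r₁ := fun h => hi (huq i h)
      rw [hm]; exact le_ciSup hbddS ⟨i, hne⟩
    obtain ⟨j, hj⟩ := exists_ne k₀
    haveI : Nonempty {i : Fin N // A i ≠ r₁} := ⟨⟨j, fun h => hj (huq j h)⟩⟩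
    obtain ⟨l, hl⟩ := Finite.exists_max (fun i : {i : Fin N // A i ≠ r₁} => A i.1)
    have hml : A l.1 = m :=
      le_antisymm (by rw [hm]; exact le_ciSup hbddS l) (by rw [hm]; exact ciSup_le hl)
    have hk₀l : k₀ ≠ l.1 := fun h => l.2 (h ▸ hk₀)
    refine le_antisymm ?_ ?_
    · refine hr₂le _ fun p => ?_
      rw [hsp p.1.1 p.1.2 p.2]
      by_cases hik : p.1.1 = k₀
      · have hjk : p.1.2 ≠ k₀ := fun h => p.2 (by rw [hik, h])
        calc (A p.1.1 + A p.1.2 + Real.sqrt ((A p.1.1 - A p.1.2) ^ 2 + 4 * c)) / 2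
            = (A p.1.2 + A p.1.1 + Real.sqrt ((A p.1.2 - A p.1.1) ^ 2 + 4 * c)) / 2 :=
              phi_symm c _ _
          _ ≤ (m + A p.1.1 + Real.sqrt ((m - A p.1.1) ^ 2 + 4 * c)) / 2 :=
              phi_mono c hc (hAm _ hjk)
          _ = (A p.1.1 + m + Real.sqrt ((A p.1.1 - m) ^ 2 + 4 * c)) / 2 := phi_symm c _ _
          _ = (r₁ + m + Real.sqrt ((r₁ - m) ^ 2 + 4 * c)) / 2 := by rw [hik, hk₀]
      · calc (A p.1.1 + A p.1.2 + Real.sqrt ((A p.1.1 - A p.1.2) ^ 2 + 4 * c)) / 2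
            ≤ (m + A p.1.2 + Real.sqrt ((m - A p.1.2) ^ 2 + 4 * c)) / 2 :=
              phi_mono c hc (hAm _ hik)
          _ = (A p.1.2 + m + Real.sqrt ((A p.1.2 - m) ^ 2 + 4 * c)) / 2 := phi_symm c _ _
          _ ≤ (r₁ + m + Real.sqrt ((r₁ - m) ^ 2 + 4 * c)) / 2 :=
              phi_mono c hc (hler₁ _)
    · have h := hp2r ⟨(k₀, l.1), hk₀l⟩
      rw [hsp k₀ l.1 hk₀l, hk₀, hml] at h
      exact h
  · -- at least two maximizers
    rintro hc0 ⟨k₁, l₁, hkl, hk₁, hl₁⟩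
    have hk₁' : A k₁ = r₁ := hk₁
    have hl₁' : A l₁ = r₁ := hl₁
    have hval : (r₁ + r₁ + Real.sqrt ((r₁ - r₁) ^ 2 + 4 * c)) / 2 = r₁ + Real.sqrt c := by
      rw [sub_self, show (0:ℝ) ^ 2 + 4 * c = 4 * c by ring, h4c]; ring
    refine le_antisymm ?_ ?_
    · refine hr₂le _ fun p => ?_
      rw [hsp p.1.1 p.1.2 p.2]
      calc (A p.1.1 + A p.1.2 + Real.sqrt ((A p.1.1 - A p.1.2) ^ 2 + 4 * c)) / 2
          ≤ (r₁ + A p.1.2 + Real.sqrt ((r₁ - A p.1.2) ^ 2 + 4 * c)) / 2 :=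
            phi_mono c hc (hler₁ _)
        _ = (A p.1.2 + r₁ + Real.sqrt ((A p.1.2 - r₁) ^ 2 + 4 * c)) / 2 := phi_symm c _ _
        _ ≤ (r₁ + r₁ + Real.sqrt ((r₁ - r₁) ^ 2 + 4 * c)) / 2 := by
            rw [phi_symm c r₁ r₁]; exact phi_mono c hc (hler₁ _)
        _ = r₁ + Real.sqrt c := hval
    · have h := hp2r ⟨(k₁, l₁), hkl⟩
      rw [hsp k₁ l₁ hkl, hk₁', hl₁', hval] at h
      exact h
  · -- c = 0
    intro hc0
    subst hc0
    refine le_antisymm ?_ ?_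
    · refine hr₂le _ fun p => ?_
      rw [hsp p.1.1 p.1.2 p.2]
      have hq : Real.sqrt ((A p.1.1 - A p.1.2) ^ 2 + 4 * 0) = |A p.1.1 - A p.1.2| := by
        rw [show (A p.1.1 - A p.1.2) ^ 2 + 4 * 0 = (A p.1.1 - A p.1.2) ^ 2 by ring,
          Real.sqrt_sq_eq_abs]
      rw [hq]
      rcases abs_cases (A p.1.1 - A p.1.2) with ⟨h1, _⟩ | ⟨h1, _⟩ <;> rw [h1] <;>
        [linarith [hler₁ p.1.1]; linarith [hler₁ p.1.2]]
    · obtain ⟨j, hj⟩ := exists_ne k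
      have hkj : k ≠ j := hj.symm
      have h := hp2r ⟨(k, j), hkj⟩
      rw [hsp k j hkj] at h
      have hsqrt : Real.sqrt ((A k - A j) ^ 2 + 4 * 0) = A k - A j := by
        rw [show (A k - A j) ^ 2 + 4 * 0 = (A k - A j) ^ 2 by ring, Real.sqrt_sq_eq_abs,
          abs_of_nonneg (by linarith [hk j])]
      rw [hsqrt] at h
      rw [← hkr]
      linarith [h]
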